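/- Let C, n ≥ 1 with C ≥ 2 and let d_0, ..., d_{m-1} be positive natural numbers with C * n = ∏_i d_i. Then there exist an index i and natural numbers a, b with a ≥ 1, b ≥ 1, a + b = d_i, such that n divides a * ∏_{j ≠ i} d_j and n divides b * ∏_{j ≠ i} d_j. In other words, the grid can always be split along some dimension into two nonempty subgrids each of size a multiple of n. -/
import Mathlib


theorem hyperplane_split_exists
    (C n m : ℕ) (d : Fin m → ℕ)
    (hC : 2 ≤ C) (hn : 1 ≤ n)
    (hd : ∀ i, 0 < d i)
    (hprod : C * n = ∏ i, d i) :
    ∃ (i : Fin m) (a b : ℕ), 1 ≤ a ∧ 1 ≤ b ∧ a + b = d i ∧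
      n ∣ a * ∏ j ∈ Finset.univ.erase i, d j ∧
      n ∣ b * ∏ j ∈ Finset.univ.erase i, d j := by
  have hn0 : 0 < n := hn
  set P : Fin m → ℕ := fun i => ∏ j ∈ Finset.univ.erase i, d j with hP
  have hdP : ∀ i, d i * P i = C * n := by
    intro i
    rw [hprod]
    exact Finset.mul_prod_erase _ _ (Finset.mem_univ i)
  set g : Fin m → ℕ := fun i => Nat.gcd n (P i) with hg
  have hg0 : ∀ i, 0 < g i := fun i => Nat.gcd_pos_of_pos_left _ hn0
  set k : Fin m → ℕ := fun i => n / g i with hk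
  have hkg : ∀ i, k i * g i = n := fun i => Nat.div_mul_cancel (Nat.gcd_dvd_left _ _)
  have hPg : ∀ i, (P i / g i) * g i = P i := fun i => Nat.div_mul_cancel (Nat.gcd_dvd_right _ _)
  have hcop : ∀ i, Nat.Coprime (k i) (P i / g i) := fun i =>
    Nat.coprime_div_gcd_div_gcd (hg0 i)
  have hkP : ∀ i, k i * P i = n * (P i / g i) := by
    intro i
    conv_lhs => rw [← hPg i]
    rw [← hkg i]; ring
  have hnkP : ∀ i, n ∣ k i * P i := fun i => ⟨P i / g i, hkP i⟩
  have hkd : ∀ i, k i ∣ d i := by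
    intro i
    have h1 : n ∣ d i * P i := by rw [hdP i]; exact ⟨C, mul_comm C n⟩
    have h2 : k i * g i ∣ d i * (P i / g i) * g i := by
      rw [hkg i, mul_assoc, hPg i]; exact h1
    have h3 : k i ∣ d i * (P i / g i) :=
      (Nat.mul_dvd_mul_iff_right (hg0 i)).mp h2
    exact (Nat.Coprime.dvd_of_dvd_mul_right (hcop i)) h3
  have hk1 : ∀ i, 1 ≤ k i := by
    intro i
    rcases Nat.eq_zero_or_pos (k i) with h | h
    · have := hkg i; rw [h, zero_mul] at this; omega
    · exact h
  by_cases hc : ∃ i, k i < d i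
  · obtain ⟨i, hi⟩ := hc
    refine ⟨i, k i, d i - k i, hk1 i, by omega, by omega, hnkP i, ?_⟩
    have hd1 : n ∣ d i * P i := by rw [hdP i]; exact ⟨C, mul_comm C n⟩
    have := Nat.dvd_sub hd1 (hnkP i)
    rwa [← Nat.sub_mul] at this
  · exfalso
    push_neg at hc
    have hkeq : ∀ i, k i = d i := fun i =>
      le_antisymm (Nat.le_of_dvd (hd i) (hkd i)) (hc i)
    have hcop2 : ∀ i, Nat.Coprime (d i) C := by
      intro i
      have h2 : C * n = n * (P i / g i) := by
        rw [← hdP i, ← hkeq i]; exact hkP i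
      have hCeq : C = P i / g i := by
        apply Nat.eq_of_mul_eq_mul_left hn0
        rw [mul_comm n C]; exact h2
      rw [hCeq, ← hkeq i]
      exact hcop i
    have hcopprod : Nat.Coprime (∏ i, d i) C :=
      Nat.Coprime.prod_left fun i _ => hcop2 i
    have hCdvd : C ∣ ∏ i, d i := ⟨n, hprod.symm⟩
    have hC1 : C ∣ 1 := hcopprod ▸ Nat.dvd_gcd hCdvd dvd_rfl
    have := Nat.le_of_dvd one_pos hC1
    omega
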